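/- Let m be a nonnegative integer and λ an m-asymmetric partition (Frobenius coordinates (α | α+m)). Then the sum of contents over cells of λ minus the sum of contents over cells of λ' equals -m·|λ|. -/

import Mathlib

open Finset

/-- A Young diagram `μ` is `m`-asymmetric if its Frobenius coordinates `(α|β)` satisfy
`β i = α i + m` for all `i` up to the rank. -/
def YoungDiagram.IsAsymmetric (m : ℕ) (μ : YoungDiagram) : Prop :=
  ∀ i : ℕ, (i, i) ∈ μ → μ.colLen i = μ.rowLen i + m

private lemma gaussZ (n : ℕ) : (∑ t ∈ Finset.range n, (t : ℤ)) * 2 = n * (n - 1) := by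
  induction n with
  | zero => simp
  | succ n ih =>
    rw [Finset.sum_range_succ]
    push_cast
    push_cast at ih
    nlinarith [ih]

private lemma fiber_eq (μ : YoungDiagram) (k : ℕ) :
    μ.cells.filter (fun u => min u.1 u.2 = k) =
      ((Finset.Ico k (μ.rowLen k)).image (fun j => (k, j))) ∪
      ((Finset.Ico (k + 1) (μ.colLen k)).image (fun i => (i, k))) := by
  ext ⟨i, j⟩
  simp only [Finset.mem_filter, Finset.mem_union, Finset.mem_image, Finset.mem_Ico,
    YoungDiagram.mem_cells, Prod.mk.injEq]
  constructor
  · rintro ⟨hmem, hmin⟩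
    rcases le_or_gt i j with hij | hij
    · have hik : i = k := by omega
      subst hik
      left
      exact ⟨j, ⟨by omega, YoungDiagram.mem_iff_lt_rowLen.mp hmem⟩, rfl, rfl⟩
    · have hjk : j = k := by omega
      subst hjk
      right
      exact ⟨i, ⟨by omega, YoungDiagram.mem_iff_lt_colLen.mp hmem⟩, rfl, rfl⟩
  · rintro (⟨j', ⟨h1, h2⟩, rfl, rfl⟩ | ⟨i', ⟨h1, h2⟩, rfl, rfl⟩)
    · exact ⟨YoungDiagram.mem_iff_lt_rowLen.mpr h2, by omega⟩
    · exact ⟨YoungDiagram.mem_iff_lt_colLen.mpr h2, by omega⟩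

private lemma hook_sum (μ : YoungDiagram) (m k : ℕ) (hab : μ.colLen k = μ.rowLen k + m)
    (hk : (k, k) ∈ μ) :
    ∑ u ∈ μ.cells.filter (fun u => min u.1 u.2 = k), (2 * ((u.2 : ℤ) - u.1)) =
      -(m : ℤ) * (μ.cells.filter (fun u => min u.1 u.2 = k)).card := by
  have hinj1 : Function.Injective (fun j : ℕ => ((k, j) : ℕ × ℕ)) := by
    intro a b hab'; simpa using hab'
  have hinj2 : Function.Injective (fun i : ℕ => ((i, k) : ℕ × ℕ)) := by
    intro a b hab'; simpa using hab'
  have hdisj : Disjoint ((Finset.Ico k (μ.rowLen k)).image (fun j => ((k, j) : ℕ × ℕ)))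
      ((Finset.Ico (k + 1) (μ.colLen k)).image (fun i => ((i, k) : ℕ × ℕ))) := by
    rw [Finset.disjoint_left]
    rintro ⟨a, b⟩ h1 h2
    simp only [Finset.mem_image, Finset.mem_Ico, Prod.mk.injEq] at h1 h2
    obtain ⟨j', hj', rfl, rfl⟩ := h1
    obtain ⟨i', hi', h, -⟩ := h2
    omega
  rw [fiber_eq, Finset.sum_union hdisj, Finset.card_union_of_disjoint hdisj,
    Finset.sum_image (fun a _ b _ h => hinj1 h), Finset.sum_image (fun a _ b _ h => hinj2 h),
    Finset.card_image_of_injective _ hinj1, Finset.card_image_of_injective _ hinj2,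
    Nat.card_Ico, Nat.card_Ico]
  have hka : k < μ.rowLen k := YoungDiagram.mem_iff_lt_rowLen.mp hk
  obtain ⟨n, hn, ha⟩ : ∃ n, 1 ≤ n ∧ μ.rowLen k = k + n := ⟨μ.rowLen k - k, by omega, by omega⟩
  rw [ha] at hab ⊢
  set N := n + m - 1 with hNdef
  have h1 : ∑ j ∈ Finset.Ico k (k + n), (2 * ((j : ℤ) - k)) =
      2 * ∑ t ∈ Finset.range n, (t : ℤ) := by
    rw [Finset.sum_Ico_eq_sum_range, Finset.mul_sum]
    simp only [add_tsub_cancel_left]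
    apply Finset.sum_congr rfl
    intro t _
    push_cast
    ring
  have h2 : ∑ i ∈ Finset.Ico (k + 1) (μ.colLen k), (2 * ((k : ℤ) - i)) =
      -2 * (∑ t ∈ Finset.range N, (t : ℤ)) - 2 * N := by
    rw [Finset.sum_Ico_eq_sum_range]
    have hcl : μ.colLen k - (k + 1) = N := by omega
    rw [hcl]
    have : ∀ t ∈ Finset.range N, 2 * ((k : ℤ) - ((k + 1 + t : ℕ) : ℤ)) = -2 * (t : ℤ) - 2 := by
      intro t _; push_cast; ring
    rw [Finset.sum_congr rfl this, Finset.sum_sub_distrib, Finset.sum_const,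
      ← Finset.mul_sum, Finset.card_range]
    ring
  rw [h1, h2]
  have hcards : (k + n - k : ℕ) = n := by omega
  have hcardc : (μ.colLen k - (k + 1) : ℕ) = N := by omega
  rw [hcards, hcardc]
  have hNc : (N : ℤ) = (n : ℤ) + m - 1 := by
    have h' : N + 1 = n + m := by omega
    omega
  have g1 := gaussZ n
  have g2 := gaussZ N
  push_cast
  nlinarith [g1, g2, hNc]

/-- If λ is an m-asymmetric partition, then the sum of contents over
cells of λ minus the sum of contents over cells of λ' equals -m·|λ|. -/
theorem sum_contents_sub_sum_contents_conj (m : ℕ) (μ : YoungDiagram)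
    (h : μ.IsAsymmetric m) :
    (∑ u ∈ μ.cells, ((u.2 : ℤ) - (u.1 : ℤ))) -
      ∑ u ∈ μ.transpose.cells, ((u.2 : ℤ) - (u.1 : ℤ)) = -(m : ℤ) * μ.cells.card := by
  have hcells : μ.transpose.cells = μ.cells.image Prod.swap := by
    ext ⟨i, j⟩
    simp [YoungDiagram.mem_cells, YoungDiagram.mem_transpose, Prod.ext_iff, eq_comm,
      Prod.swap]
  have htr : ∑ u ∈ μ.transpose.cells, ((u.2 : ℤ) - (u.1 : ℤ)) =
      ∑ u ∈ μ.cells, ((u.1 : ℤ) - (u.2 : ℤ)) := by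
    rw [hcells, Finset.sum_image (fun a _ b _ h => Prod.swap_injective h)]
    rfl
  rw [htr, ← Finset.sum_sub_distrib]
  have hsum : ∑ u ∈ μ.cells, (((u.2 : ℤ) - u.1) - ((u.1 : ℤ) - u.2)) =
      ∑ u ∈ μ.cells, (2 * ((u.2 : ℤ) - u.1)) := by
    apply Finset.sum_congr rfl; intro u _; ring
  rw [hsum]
  have hmaps : ∀ u ∈ μ.cells, min u.1 u.2 ∈ Finset.range (μ.colLen 0) := by
    rintro ⟨i, j⟩ hu
    simp only [Finset.mem_range]
    have h1 : i < μ.colLen j := YoungDiagram.mem_iff_lt_colLen.mp (μ.mem_cells _ |>.mp hu)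
    have h2 : μ.colLen j ≤ μ.colLen 0 := μ.colLen_anti 0 j (Nat.zero_le _)
    omega
  rw [← Finset.sum_fiberwise_of_maps_to hmaps, Finset.card_eq_sum_card_fiberwise hmaps]
  push_cast
  rw [Finset.mul_sum]
  apply Finset.sum_congr rfl
  intro k _
  by_cases hk : (k, k) ∈ μ
  · exact hook_sum μ m k (h k hk) hk
  · have : μ.cells.filter (fun u => min u.1 u.2 = k) = ∅ := by
      rw [Finset.filter_eq_empty_iff]
      rintro ⟨i, j⟩ hu hmin
      exact hk (μ.up_left_mem (by omega) (by omega) (μ.mem_cells _ |>.mp hu))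
    simp [this]
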